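/- Let k be a field, R a nontrivial commutative k-algebra, M an R-module, r a natural number, and P := MvPolynomial (Fin r) R. Let e ∈ P, set d := e.totalDegree, and assume that the degree-d homogeneous component of e equals MvPolynomial.map (algebraMap k R) q for some nonzero q ∈ MvPolynomial (Fin r) k. Consider the base change N := P ⊗[R] M with its natural P-module structure, and for δ ∈ ℕ let F δ ⊆ N denote the image in N of (the submodule of polynomials of total degree ≤ δ) ⊗[R] M. Then: (1) scalar multiplication by e on N is injective; (2) e • (F δ) ⊆ F (δ + d) for every δ; and (3) if β ∈ F δ and e • β ∈ F (δ + d − 1), then β ∈ F (δ − 1) when δ ≥ 1, and β = 0 when δ = 0 and d ≥ 1. -/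

import Mathlib

set_option maxHeartbeats 1000000


open scoped TensorProduct

namespace EulerClassAux

open MvPolynomial

variable {R M : Type*} [CommRing R] [AddCommGroup M] [Module R M] {r : ℕ}

lemma degree_add (a b : Fin r →₀ ℕ) :
    Finsupp.degree (a + b) = Finsupp.degree a + Finsupp.degree b := by
  simp only [Finsupp.degree_eq_weight_one]
  exact map_add _ a b

/-- Port of the removed `MvPolynomial.scalarRTensor`. -/
noncomputable def scalarRTensor :
    MvPolynomial (Fin r) R ⊗[R] M ≃ₗ[R] (Fin r →₀ ℕ) →₀ M :=
  (LinearEquiv.rTensor M (AddMonoidAlgebra.coeffLinearEquiv R)).trans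
    (TensorProduct.finsuppScalarLeft R M (Fin r →₀ ℕ))

lemma scalarRTensor_apply_tmul_apply (p : MvPolynomial (Fin r) R) (n : M)
    (d : Fin r →₀ ℕ) : scalarRTensor (p ⊗ₜ[R] n) d = (coeff d p) • n := by
  simp [scalarRTensor, coeff]

lemma scalarRTensor_symm_apply_single (e : Fin r →₀ ℕ) (n : M) :
    scalarRTensor.symm (Finsupp.single e n) = (monomial e (1 : R)) ⊗ₜ[R] n := by
  simp [scalarRTensor, ← single_eq_monomial]

/-- Convolution formula for the action of a polynomial on `P ⊗[R] M` under
`MvPolynomial.scalarRTensor`. -/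
lemma conv (e : MvPolynomial (Fin r) R) (β : MvPolynomial (Fin r) R ⊗[R] M)
    (m : Fin r →₀ ℕ) :
    scalarRTensor (e • β) m =
      ∑ x ∈ Finset.HasAntidiagonal.antidiagonal m, e.coeff x.1 • scalarRTensor β x.2 := by
  induction β using TensorProduct.induction_on with
  | zero => simp
  | tmul p n =>
      have h1 : e • (p ⊗ₜ[R] n) = (e * p) ⊗ₜ[R] n := by
        rw [TensorProduct.smul_tmul', smul_eq_mul]
      rw [h1, scalarRTensor_apply_tmul_apply, coeff_mul, Finset.sum_smul]
      refine Finset.sum_congr rfl fun x _ => ?_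
      rw [scalarRTensor_apply_tmul_apply, mul_smul]
  | add x y hx hy =>
      rw [smul_add, map_add, Finsupp.add_apply, hx, hy, ← Finset.sum_add_distrib]
      simp only [map_add, Finsupp.add_apply, smul_add]

/-- Membership in the degree filtration, in terms of coefficients. -/
lemma mem_range_iff (δ : ℕ) (β : MvPolynomial (Fin r) R ⊗[R] M) :
    β ∈ LinearMap.range
        (TensorProduct.map (MvPolynomial.restrictTotalDegree (Fin r) R δ).subtype
          (LinearMap.id : M →ₗ[R] M)) ↔
      ∀ m : Fin r →₀ ℕ, δ < Finsupp.degree m → scalarRTensor β m = 0 := by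
  constructor
  · rintro ⟨t, rfl⟩ m hm
    induction t using TensorProduct.induction_on with
    | zero => simp
    | tmul p n =>
        rw [TensorProduct.map_tmul, Submodule.coe_subtype, LinearMap.id_apply,
          scalarRTensor_apply_tmul_apply]
        have hp : (p : MvPolynomial (Fin r) R).totalDegree ≤ δ :=
          (mem_restrictTotalDegree _ _ _).mp p.2
        have : coeff m (p : MvPolynomial (Fin r) R) = 0 := by
          apply coeff_eq_zero_of_totalDegree_lt
          exact lt_of_le_of_lt hp hm
        rw [this, zero_smul]
    | add x y hx hy =>
        rw [map_add, map_add, Finsupp.add_apply, hx, hy, add_zero]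
  · intro h
    set g := scalarRTensor β with hg
    have hβ : β = scalarRTensor.symm g := (LinearEquiv.symm_apply_apply _ _).symm
    have hgs : g = ∑ m ∈ g.support, Finsupp.single m (g m) := (Finsupp.sum_single g).symm
    rw [hβ, hgs, map_sum]
    apply Submodule.sum_mem
    intro m hm
    rw [scalarRTensor_symm_apply_single]
    have hmd : Finsupp.degree m ≤ δ := by
      by_contra h'
      exact (Finsupp.mem_support_iff.mp hm) (h m (lt_of_not_ge h'))
    have hmono : (monomial m (1 : R)) ∈ MvPolynomial.restrictTotalDegree (Fin r) R δ := by
      rw [mem_restrictTotalDegree]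
      exact le_trans (totalDegree_monomial_le m 1) hmd
    exact ⟨(⟨monomial m 1, hmono⟩ : MvPolynomial.restrictTotalDegree (Fin r) R δ) ⊗ₜ[R] g m,
      by rw [TensorProduct.map_tmul]; rfl⟩

end EulerClassAux

open MvPolynomial EulerClassAux

/-- Multiplication by a polynomial whose leading form comes from a nonzero polynomial
over a field: on `N = P ⊗[R] M` (with `P = MvPolynomial (Fin r) R` and its natural
`P`-module structure), scalar multiplication by `e` is injective, maps the total-degree
filtration `F δ` into `F (δ + d)` where `d = e.totalDegree`, and raises degrees by
exactly `d`: if `β ∈ F δ` and `e • β ∈ F (δ + d - 1)` then `β ∈ F (δ - 1)` when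
`δ ≥ 1`, and `β = 0` when `δ = 0` and `d ≥ 1`. -/
theorem euler_class_multiplication_filtration
    (k R M : Type*) [Field k] [CommRing R] [Algebra k R] [Nontrivial R]
    [AddCommGroup M] [Module R M] (r : ℕ)
    (e : MvPolynomial (Fin r) R) (d : ℕ) (hd : d = e.totalDegree)
    (q : MvPolynomial (Fin r) k) (hq : q ≠ 0)
    (htop : MvPolynomial.homogeneousComponent d e = MvPolynomial.map (algebraMap k R) q)
    (F : ℕ → Submodule R (MvPolynomial (Fin r) R ⊗[R] M))
    (hF : ∀ δ : ℕ, F δ = LinearMap.range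
      (TensorProduct.map (MvPolynomial.restrictTotalDegree (Fin r) R δ).subtype
        (LinearMap.id : M →ₗ[R] M))) :
    Function.Injective (fun β : MvPolynomial (Fin r) R ⊗[R] M => e • β) ∧
      (∀ δ : ℕ, ∀ β ∈ F δ, e • β ∈ F (δ + d)) ∧
      (∀ δ : ℕ, ∀ β ∈ F δ, e • β ∈ F (δ + d - 1) →
        (1 ≤ δ → β ∈ F (δ - 1)) ∧ (δ = 0 → 1 ≤ d → β = 0)) := by
  -- basic facts about `q` and the map `k → R`
  have hφ : Function.Injective (algebraMap k R) := (algebraMap k R).injective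
  have hqsupp : ∀ m ∈ q.support,
      Finsupp.degree m = d ∧ e.coeff m = algebraMap k R (q.coeff m) := by
    intro m hm
    have h1 : coeff m (MvPolynomial.homogeneousComponent d e)
        = algebraMap k R (q.coeff m) := by rw [htop, coeff_map]
    have h2 : algebraMap k R (q.coeff m) ≠ 0 := by
      intro h
      exact (MvPolynomial.mem_support_iff.mp hm) (hφ (by simpa using h))
    rw [coeff_homogeneousComponent] at h1
    by_cases hdm : Finsupp.degree m = d
    · refine ⟨hdm, ?_⟩
      rw [if_pos hdm] at h1; exact h1
    · rw [if_neg hdm] at h1; exact absurd h1.symm h2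
  -- the lexicographic monomial order
  set mo : MonomialOrder (Fin r) := MonomialOrder.lex with hmo
  -- the key degree-raising computation
  have key : ∀ (δ : ℕ) (β : MvPolynomial (Fin r) R ⊗[R] M),
      (∀ m : Fin r →₀ ℕ, δ < Finsupp.degree m → scalarRTensor β m = 0) →
      (∃ μ0 : Fin r →₀ ℕ, Finsupp.degree μ0 = δ ∧ scalarRTensor β μ0 ≠ 0) →
      ∃ m : Fin r →₀ ℕ, Finsupp.degree m = δ + d ∧ scalarRTensor (e • β) m ≠ 0 := by
    intro δ β hβ ⟨μ0, hμ0d, hμ0ne⟩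
    set S : Finset (Fin r →₀ ℕ) :=
      (scalarRTensor β).support.filter (fun m => Finsupp.degree m = δ) with hS
    have hμ0S : μ0 ∈ S := by
      rw [hS, Finset.mem_filter]
      exact ⟨Finsupp.mem_support_iff.mpr hμ0ne, hμ0d⟩
    obtain ⟨μ, hμS, hμmax⟩ := S.exists_max_image (fun m => mo.toSyn m) ⟨μ0, hμ0S⟩
    obtain ⟨hμsupp, hμd⟩ := Finset.mem_filter.mp hμS
    obtain ⟨ν, hνsupp, hνmax⟩ :=
      q.support.exists_max_image (fun m => mo.toSyn m) (support_nonempty.mpr hq)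
    obtain ⟨hνd, hνcoeff⟩ := hqsupp ν hνsupp
    refine ⟨ν + μ, ?_, ?_⟩
    · rw [degree_add, hνd, hμd, add_comm]
    · rw [conv]
      rw [Finset.sum_eq_single (ν, μ)]
      · rw [hνcoeff]
        have hu : IsUnit (algebraMap k R (q.coeff ν)) :=
          ((MvPolynomial.mem_support_iff.mp hνsupp).isUnit).map (algebraMap k R)
        rw [ne_eq, hu.smul_eq_zero]
        exact Finsupp.mem_support_iff.mp hμsupp
      · intro b hb hne
        rw [Finset.HasAntidiagonal.mem_antidiagonal] at hb
        by_cases hc : e.coeff b.1 = 0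
        · rw [hc, zero_smul]
        by_cases hz : scalarRTensor β b.2 = 0
        · rw [hz, smul_zero]
        exfalso
        have hd1 : Finsupp.degree b.1 ≤ d := by
          rw [hd]
          exact MvPolynomial.le_totalDegree (MvPolynomial.mem_support_iff.mpr hc)
        have hd2 : Finsupp.degree b.2 ≤ δ := by
          by_contra h'
          exact hz (hβ _ (lt_of_not_ge h'))
        have hdsum : Finsupp.degree b.1 + Finsupp.degree b.2 = d + δ := by
          rw [← degree_add, hb, degree_add, hνd, hμd]
        have hd1' : Finsupp.degree b.1 = d := by omega
        have hd2' : Finsupp.degree b.2 = δ := by omega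
        -- `b.1` lies in the support of `q`
        have hb1q : b.1 ∈ q.support := by
          rw [MvPolynomial.mem_support_iff]
          intro h0
          have : coeff b.1 (MvPolynomial.homogeneousComponent d e) = 0 := by
            rw [htop, coeff_map, h0, map_zero]
          rw [coeff_homogeneousComponent, if_pos hd1'] at this
          exact hc this
        have hb2S : b.2 ∈ S := by
          rw [hS, Finset.mem_filter]
          exact ⟨Finsupp.mem_support_iff.mpr hz, hd2'⟩
        have hle1 : mo.toSyn b.1 ≤ mo.toSyn ν := hνmax b.1 hb1q
        have hle2 : mo.toSyn b.2 ≤ mo.toSyn μ := hμmax b.2 hb2S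
        have hsum : mo.toSyn b.1 + mo.toSyn b.2 = mo.toSyn ν + mo.toSyn μ := by
          rw [← map_add, ← map_add, hb]
        have heq1 : mo.toSyn b.1 = mo.toSyn ν := by
          rcases lt_or_eq_of_le hle1 with h | h
          · exact absurd hsum (ne_of_lt (add_lt_add_of_lt_of_le h hle2))
          · exact h
        have heq2 : mo.toSyn b.2 = mo.toSyn μ := by
          have := hsum
          rw [heq1] at this
          exact add_left_cancel this
        exact hne (Prod.ext (mo.toSyn.injective heq1) (mo.toSyn.injective heq2))
      · intro h
        simp at h
  -- the easy degree bound
  have bound : ∀ (δ : ℕ) (β : MvPolynomial (Fin r) R ⊗[R] M),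
      (∀ m : Fin r →₀ ℕ, δ < Finsupp.degree m → scalarRTensor β m = 0) →
      ∀ m : Fin r →₀ ℕ, δ + d < Finsupp.degree m → scalarRTensor (e • β) m = 0 := by
    intro δ β hβ m hm
    rw [conv]
    apply Finset.sum_eq_zero
    intro b hb
    rw [Finset.HasAntidiagonal.mem_antidiagonal] at hb
    by_cases hc : e.coeff b.1 = 0
    · rw [hc, zero_smul]
    by_cases hz : scalarRTensor β b.2 = 0
    · rw [hz, smul_zero]
    exfalso
    have hd1 : Finsupp.degree b.1 ≤ d := by
      rw [hd]
      exact MvPolynomial.le_totalDegree (MvPolynomial.mem_support_iff.mpr hc)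
    have hd2 : Finsupp.degree b.2 ≤ δ := by
      by_contra h'
      exact hz (hβ _ (lt_of_not_ge h'))
    have : Finsupp.degree m = Finsupp.degree b.1 + Finsupp.degree b.2 := by
      rw [← degree_add, hb]
    omega
  -- injectivity
  have inj : ∀ β : MvPolynomial (Fin r) R ⊗[R] M, β ≠ 0 → e • β ≠ 0 := by
    intro β hβne
    have hg : scalarRTensor β ≠ 0 := by
      intro h
      exact hβne ((LinearEquiv.map_eq_zero_iff scalarRTensor).mp h)
    obtain ⟨μ0, hμ0, hμ0max⟩ :=
      (scalarRTensor β).support.exists_max_image (fun m => Finsupp.degree m)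
        (Finsupp.support_nonempty_iff.mpr hg)
    have hβ : ∀ m : Fin r →₀ ℕ, Finsupp.degree μ0 < Finsupp.degree m →
        scalarRTensor β m = 0 := by
      intro m hm
      by_contra h'
      exact absurd (hμ0max m (Finsupp.mem_support_iff.mpr h')) (not_le_of_gt hm)
    obtain ⟨m, _, hmne⟩ := key (Finsupp.degree μ0) β hβ
      ⟨μ0, rfl, Finsupp.mem_support_iff.mp hμ0⟩
    intro h0
    rw [h0] at hmne
    simp at hmne
  refine ⟨?_, ?_, ?_⟩
  · intro β1 β2 h
    by_contra hne
    have h0 : e • (β1 - β2) = 0 := by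
      rw [smul_sub, sub_eq_zero]; exact h
    exact inj (β1 - β2) (sub_ne_zero.mpr hne) h0
  · intro δ β hβ
    rw [hF] at hβ ⊢
    rw [mem_range_iff] at hβ ⊢
    exact bound δ β hβ
  · intro δ β hβ hmul
    rw [hF, mem_range_iff] at hβ hmul
    constructor
    · intro hδ
      rw [hF, mem_range_iff]
      intro m hm
      by_contra hne
      have hmd : Finsupp.degree m = δ := by
        have : Finsupp.degree m ≤ δ := by
          by_contra h'
          exact hne (hβ m (lt_of_not_ge h'))
        omega
      obtain ⟨m', hm'd, hm'ne⟩ := key δ β hβ ⟨m, hmd, hne⟩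
      exact hm'ne (hmul m' (by omega))
    · intro hδ0 hd1
      by_contra hβne
      have hg : scalarRTensor β ≠ 0 := by
        intro h
        exact hβne ((LinearEquiv.map_eq_zero_iff scalarRTensor).mp h)
      obtain ⟨μ0, hμ0⟩ := Finsupp.support_nonempty_iff.mpr hg
      have hμ0d : Finsupp.degree μ0 = δ := by
        have : Finsupp.degree μ0 ≤ δ := by
          by_contra h'
          exact (Finsupp.mem_support_iff.mp hμ0) (hβ μ0 (lt_of_not_ge h'))
        omega
      obtain ⟨m', hm'd, hm'ne⟩ := key δ β hβ ⟨μ0, hμ0d, Finsupp.mem_support_iff.mp hμ0⟩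
      exact hm'ne (hmul m' (by omega))
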